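/- Along any solution (m, n, e) of the magnetic rod equations, the Hamiltonian ℋ = m₁²/(2B₁) + m₂²/(2B₂) + m₃²/(2C) + n₁²/(2H) + n₂²/(2J) + n₃²/(2K) + n₃ is constant in t (its derivative vanishes identically). -/

import Mathlib

open Matrix Real

/-- Along any solution `(m, n, e)` of the magnetic rod equations,
the Hamiltonian `ℋ = m₁²/(2B₁) + m₂²/(2B₂) + m₃²/(2C) + n₁²/(2H) + n₂²/(2J) + n₃²/(2K) + n₃`
is constant in `t`: its derivative vanishes identically. -/
theorem hamiltonian_conserved
    (B₁ B₂ C H J K lam : ℝ)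
    (hB₁ : 0 < B₁) (hB₂ : 0 < B₂) (hC : 0 < C) (hH : 0 < H) (hJ : 0 < J) (hK : 0 < K)
    (m n e : ℝ → Fin 3 → ℝ)
    (hm : Differentiable ℝ m) (hn : Differentiable ℝ n) (he : Differentiable ℝ e)
    (u : ℝ → Fin 3 → ℝ) (hu : ∀ t, u t = ![m t 0 / B₁, m t 1 / B₂, m t 2 / C])
    (w : ℝ → Fin 3 → ℝ) (hw : ∀ t, w t = ![n t 0 / H, n t 1 / J, 1 + n t 2 / K])
    (heqm : ∀ t, deriv m t = m t ⨯₃ u t + n t ⨯₃ w t)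
    (heqn : ∀ t, deriv n t = n t ⨯₃ u t + lam • (e t ⨯₃ w t))
    (heqe : ∀ t, deriv e t = e t ⨯₃ u t) :
    ∀ t, deriv (fun t =>
      (m t 0) ^ 2 / (2 * B₁) + (m t 1) ^ 2 / (2 * B₂) + (m t 2) ^ 2 / (2 * C)
        + (n t 0) ^ 2 / (2 * H) + (n t 1) ^ 2 / (2 * J) + (n t 2) ^ 2 / (2 * K)
        + n t 2) t = 0 := by
  intro t
  have hmi : ∀ i, HasDerivAt (fun s => m s i) (deriv m t i) t :=
    hasDerivAt_pi.1 (hm t).hasDerivAt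
  have hni : ∀ i, HasDerivAt (fun s => n s i) (deriv n t i) t :=
    hasDerivAt_pi.1 (hn t).hasDerivAt
  have hD : HasDerivAt (fun t =>
      (m t 0) ^ 2 / (2 * B₁) + (m t 1) ^ 2 / (2 * B₂) + (m t 2) ^ 2 / (2 * C)
        + (n t 0) ^ 2 / (2 * H) + (n t 1) ^ 2 / (2 * J) + (n t 2) ^ 2 / (2 * K)
        + n t 2)
      ((2 * m t 0 ^ 1 * deriv m t 0) / (2 * B₁) + (2 * m t 1 ^ 1 * deriv m t 1) / (2 * B₂)
        + (2 * m t 2 ^ 1 * deriv m t 2) / (2 * C)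
        + (2 * n t 0 ^ 1 * deriv n t 0) / (2 * H) + (2 * n t 1 ^ 1 * deriv n t 1) / (2 * J)
        + (2 * n t 2 ^ 1 * deriv n t 2) / (2 * K) + deriv n t 2) t := by
    exact ((((((((hmi 0).pow 2).div_const _).add (((hmi 1).pow 2).div_const _)).add
      (((hmi 2).pow 2).div_const _)).add (((hni 0).pow 2).div_const _)).add
      (((hni 1).pow 2).div_const _)).add (((hni 2).pow 2).div_const _)).add (hni 2)
  rw [hD.deriv]
  have em := heqm t
  have en := heqn t
  have em0 := congrFun em 0
  have em1 := congrFun em 1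
  have em2 := congrFun em 2
  have en0 := congrFun en 0
  have en1 := congrFun en 1
  have en2 := congrFun en 2
  simp only [crossProduct, hu, hw, LinearMap.mk₂_apply, Pi.add_apply, Pi.smul_apply,
    Matrix.cons_val_zero, Matrix.cons_val_one, Matrix.head_cons, Matrix.cons_val_two,
    Matrix.tail_cons, smul_eq_mul] at em0 em1 em2 en0 en1 en2
  rw [em0, em1, em2, en0, en1, en2]
  field_simp
  ring
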